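/- Let σ > 0 and let Z be a real random variable whose law is the centered Gaussian measure on ℝ with variance σ². Then there exist constants c, C > 0 such that for every real t ≥ 1, c/√t ≤ E[(Φ(Z/(σ²·√t)) − Φ(−Z/(σ²·√t)))·1_{Z>0}] ≤ C/√t. -/

import Mathlib

open Real Filter MeasureTheory

/-- Standard normal density. -/
noncomputable def stdPhi (u : ℝ) : ℝ := (Real.sqrt (2 * Real.pi))⁻¹ * Real.exp (-u ^ 2 / 2)

/-- Standard normal distribution function. -/
noncomputable def stdCdf (u : ℝ) : ℝ := ∫ s in Set.Iic u, stdPhi s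

/-- Standard normal survivor function. -/
noncomputable def stdSurv (u : ℝ) : ℝ := 1 - stdCdf u

noncomputable def fFun (x y : ℝ) : ℝ := stdSurv (x - y) - Real.exp (2 * x * y) * stdSurv (x + y)

noncomputable def gFun (x y : ℝ) : ℝ := 1 - x * stdSurv (x + y) / stdPhi (x + y)

lemma stdPhi_eq : stdPhi = ProbabilityTheory.gaussianPDFReal 0 1 := by
  funext u
  simp [stdPhi, ProbabilityTheory.gaussianPDFReal]

lemma stdPhi_pos (u : ℝ) : 0 < stdPhi u := by
  have h : 0 < Real.sqrt (2 * Real.pi) := Real.sqrt_pos.2 (by positivity)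
  exact mul_pos (inv_pos.2 h) (Real.exp_pos _)

lemma stdPhi_le_zero (u : ℝ) : stdPhi u ≤ stdPhi 0 := by
  unfold stdPhi
  refine mul_le_mul_of_nonneg_left ?_ (inv_nonneg.2 (Real.sqrt_nonneg _))
  exact Real.exp_le_exp.2 (by nlinarith [sq_nonneg u])

lemma stdPhi_one_le {u : ℝ} (h : |u| ≤ 1) : stdPhi 1 ≤ stdPhi u := by
  unfold stdPhi
  refine mul_le_mul_of_nonneg_left ?_ (inv_nonneg.2 (Real.sqrt_nonneg _))
  have := abs_le.1 h
  exact Real.exp_le_exp.2 (by nlinarith [this.1, this.2])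

lemma integrable_stdPhi : Integrable stdPhi := by
  rw [stdPhi_eq]; exact ProbabilityTheory.integrable_gaussianPDFReal 0 1

lemma integral_stdPhi : ∫ u, stdPhi u = 1 := by
  rw [stdPhi_eq]; exact ProbabilityTheory.integral_gaussianPDFReal_eq_one 0 one_ne_zero

lemma monotone_stdCdf : Monotone stdCdf := by
  intro a b hab
  exact setIntegral_mono_set integrable_stdPhi.integrableOn
    (ae_of_all _ fun x => (stdPhi_pos x).le)
    (HasSubset.Subset.eventuallyLE (Set.Iic_subset_Iic.2 hab))

lemma measurable_stdCdf : Measurable stdCdf := monotone_stdCdf.measurable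

lemma stdCdf_nonneg (u : ℝ) : 0 ≤ stdCdf u :=
  setIntegral_nonneg measurableSet_Iic fun x _ => (stdPhi_pos x).le

lemma stdCdf_le_one (u : ℝ) : stdCdf u ≤ 1 := by
  rw [← integral_stdPhi]
  exact setIntegral_le_integral integrable_stdPhi (ae_of_all _ fun x => (stdPhi_pos x).le)

lemma stdCdf_sub {u : ℝ} (hu : 0 ≤ u) :
    stdCdf u - stdCdf (-u) = ∫ s in Set.Ioc (-u) u, stdPhi s := by
  rw [stdCdf, stdCdf,
    intervalIntegral.integral_Iic_sub_Iic integrable_stdPhi.integrableOn integrable_stdPhi.integrableOn,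
    intervalIntegral.integral_of_le (by linarith)]

lemma stdCdf_sub_nonneg {u : ℝ} (hu : 0 ≤ u) : 0 ≤ stdCdf u - stdCdf (-u) :=
  sub_nonneg.2 (monotone_stdCdf (by linarith))

lemma stdCdf_sub_le {u : ℝ} (hu : 0 ≤ u) :
    stdCdf u - stdCdf (-u) ≤ 2 * stdPhi 0 * u := by
  rw [stdCdf_sub hu]
  have h1 : ∫ s in Set.Ioc (-u) u, stdPhi s ≤ ∫ _ in Set.Ioc (-u) u, stdPhi 0 := by
    refine setIntegral_mono_on integrable_stdPhi.integrableOn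
      (integrableOn_const (by simp [Real.volume_Ioc])) measurableSet_Ioc
      fun x _ => stdPhi_le_zero x
  refine h1.trans ?_
  rw [setIntegral_const, measureReal_def, Real.volume_Ioc, smul_eq_mul,
    ENNReal.toReal_ofReal (by linarith)]
  nlinarith [stdPhi_pos 0]

lemma le_stdCdf_sub {u : ℝ} (hu0 : 0 ≤ u) (hu1 : u ≤ 1) :
    2 * stdPhi 1 * u ≤ stdCdf u - stdCdf (-u) := by
  rw [stdCdf_sub hu0]
  have h1 : ∫ _ in Set.Ioc (-u) u, stdPhi 1 ≤ ∫ s in Set.Ioc (-u) u, stdPhi s := by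
    refine setIntegral_mono_on
      (integrableOn_const (by simp [Real.volume_Ioc]))
      integrable_stdPhi.integrableOn measurableSet_Ioc
      fun x hx => stdPhi_one_le (abs_le.2 ⟨by linarith [hx.1], by linarith [hx.2]⟩)
  refine le_trans ?_ h1
  rw [setIntegral_const, measureReal_def, Real.volume_Ioc, smul_eq_mul,
    ENNReal.toReal_ofReal (by linarith)]
  nlinarith [stdPhi_pos 1]

/-- Two-sided bound of order 1/√t for the Gaussian expectation
E[(Φ(Z/(σ²√t)) − Φ(−Z/(σ²√t)))·1_{Z>0}]. -/
theorem gaussian_expectation_two_sided (σ : ℝ) (hσ : 0 < σ) :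
    ∃ c C : ℝ, 0 < c ∧ 0 < C ∧ ∀ t : ℝ, 1 ≤ t →
      c / Real.sqrt t ≤
        (∫ z, (stdCdf (z / (σ ^ 2 * Real.sqrt t)) - stdCdf (-(z / (σ ^ 2 * Real.sqrt t)))) *
            Set.indicator (Set.Ioi (0 : ℝ)) (fun _ => (1 : ℝ)) z
          ∂(ProbabilityTheory.gaussianReal 0 (Real.toNNReal (σ ^ 2)))) ∧
      (∫ z, (stdCdf (z / (σ ^ 2 * Real.sqrt t)) - stdCdf (-(z / (σ ^ 2 * Real.sqrt t)))) *
            Set.indicator (Set.Ioi (0 : ℝ)) (fun _ => (1 : ℝ)) z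
          ∂(ProbabilityTheory.gaussianReal 0 (Real.toNNReal (σ ^ 2)))) ≤ C / Real.sqrt t := by
  classical
  set v : NNReal := Real.toNNReal (σ ^ 2) with hv_def
  have hσ2 : (0:ℝ) < σ ^ 2 := by positivity
  have hv : v ≠ 0 := (Real.toNNReal_pos.2 hσ2).ne'
  have hvR : (v : ℝ) = σ ^ 2 := Real.coe_toNNReal _ hσ2.le
  set μ := ProbabilityTheory.gaussianReal 0 v with hμ_def
  -- integrability of the identity w.r.t. μ
  have hId : Integrable (fun z : ℝ => z) μ := by
    rw [hμ_def, ProbabilityTheory.gaussianReal_of_var_ne_zero 0 hv,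
      integrable_withDensity_iff (ProbabilityTheory.measurable_gaussianPDF 0 v)
        (ae_of_all _ fun x => ENNReal.ofReal_lt_top)]
    have hb : (0:ℝ) < 1 / (2 * (v:ℝ)) := by rw [hvR]; positivity
    have := (integrable_mul_exp_neg_mul_sq hb).const_mul (Real.sqrt (2 * Real.pi * v))⁻¹
    refine this.congr (ae_of_all _ fun x => ?_)
    have hv0 : (v:ℝ) ≠ 0 := by rw [hvR]; positivity
    simp only [ProbabilityTheory.gaussianPDF, ProbabilityTheory.gaussianPDFReal,
      ENNReal.toReal_ofReal (ProbabilityTheory.gaussianPDFReal_nonneg 0 v x)]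
    rw [ENNReal.toReal_ofReal (by positivity)]
    field_simp
    simp only [sub_zero]
  have habs : Integrable (fun z : ℝ => |z|) μ := hId.abs
  set M : ℝ := ∫ z, |z| ∂μ with hM_def
  have hM0 : 0 ≤ M := integral_nonneg fun z => abs_nonneg z
  set K : ℝ := ∫ z in Set.Ioc 0 (σ ^ 2), z ∂μ with hK_def
  have hμIoc : 0 < μ (Set.Ioc 0 (σ ^ 2)) := by
    rcases (zero_le : 0 ≤ μ (Set.Ioc 0 (σ ^ 2))).lt_or_eq with h | h
    · exact h
    · exfalso
      have hac := ProbabilityTheory.gaussianReal_absolutelyContinuous' 0 hv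
      have hvol : volume (Set.Ioc 0 (σ ^ 2)) = 0 := hac h.symm
      rw [Real.volume_Ioc, sub_zero] at hvol
      simp only [ENNReal.ofReal_eq_zero] at hvol
      linarith
  have hK : 0 < K := by
    rw [hK_def]
    refine (setIntegral_pos_iff_support_of_nonneg_ae ?_ hId.integrableOn).2 ?_
    · exact (ae_restrict_iff' measurableSet_Ioc).2 (ae_of_all _ fun x hx => hx.1.le)
    · have hs : Function.support (fun z : ℝ => z) ∩ Set.Ioc 0 (σ ^ 2)
          = Set.Ioc 0 (σ ^ 2) := by
        apply Set.inter_eq_self_of_subset_right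
        intro x hx
        exact ne_of_gt hx.1
      rw [hs]
      exact hμIoc
  have hphi1 := stdPhi_pos 1
  have hphi0 := stdPhi_pos 0
  refine ⟨2 * stdPhi 1 * K / σ ^ 2, 2 * stdPhi 0 * M / σ ^ 2 + 1,
    div_pos (by nlinarith) hσ2, by
      have h1 : 0 ≤ 2 * stdPhi 0 * M / σ ^ 2 := by positivity
      linarith, fun t ht => ?_⟩
  set a : ℝ := σ ^ 2 * Real.sqrt t with ha_def
  have hst : (1:ℝ) ≤ Real.sqrt t := by
    rw [show (1:ℝ) = Real.sqrt 1 from (Real.sqrt_one).symm]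
    exact Real.sqrt_le_sqrt ht
  have ht0 : (0:ℝ) < Real.sqrt t := lt_of_lt_of_le one_pos hst
  have ha : 0 < a := mul_pos hσ2 ht0
  have haσ : σ ^ 2 ≤ a := le_mul_of_one_le_right hσ2.le hst
  set F : ℝ → ℝ := fun z =>
    (stdCdf (z / a) - stdCdf (-(z / a))) *
      Set.indicator (Set.Ioi (0:ℝ)) (fun _ => (1:ℝ)) z with hF_def
  have hFmeas : Measurable F :=
    ((measurable_stdCdf.comp (measurable_id.div_const a)).sub
      (measurable_stdCdf.comp (measurable_id.div_const a).neg)).mul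
      (measurable_const.indicator measurableSet_Ioi)
  have hF0 : ∀ z, 0 ≤ F z := by
    intro z
    by_cases hz : z ∈ Set.Ioi (0:ℝ)
    · rw [hF_def]
      simp only [Set.indicator_of_mem hz, mul_one]
      exact stdCdf_sub_nonneg (div_nonneg (le_of_lt hz) ha.le)
    · simp [hF_def, Set.indicator_of_notMem hz]
  have hFle1 : ∀ z, F z ≤ 1 := by
    intro z
    by_cases hz : z ∈ Set.Ioi (0:ℝ)
    · rw [hF_def]
      simp only [Set.indicator_of_mem hz, mul_one]
      have h1 := stdCdf_le_one (z / a)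
      have h2 := stdCdf_nonneg (-(z / a))
      linarith
    · simp [hF_def, Set.indicator_of_notMem hz]
  have hFint : Integrable F μ := by
    refine Integrable.mono' (integrable_const 1) hFmeas.aestronglyMeasurable
      (ae_of_all _ fun z => ?_)
    rw [Real.norm_eq_abs, abs_of_nonneg (hF0 z)]
    simpa using hFle1 z
  constructor
  · -- lower bound
    have hlow2 : ∫ z in Set.Ioc 0 (σ ^ 2), (2 * stdPhi 1 / a) * z ∂μ
        ≤ ∫ z in Set.Ioc 0 (σ ^ 2), F z ∂μ := by
      refine setIntegral_mono_on (hId.const_mul _).integrableOn hFint.integrableOn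
        measurableSet_Ioc fun z hz => ?_
      have hz0 : 0 < z := hz.1
      have hz1 : z / a ≤ 1 := (div_le_one ha).2 (hz.2.trans haσ)
      rw [hF_def]
      simp only [Set.indicator_of_mem (Set.mem_Ioi.2 hz0), mul_one]
      have := le_stdCdf_sub (div_nonneg hz0.le ha.le) hz1
      calc 2 * stdPhi 1 / a * z = 2 * stdPhi 1 * (z / a) := by ring
        _ ≤ _ := this
    have hlow1 : ∫ z in Set.Ioc 0 (σ ^ 2), F z ∂μ ≤ ∫ z, F z ∂μ :=
      setIntegral_le_integral hFint (ae_of_all _ hF0)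
    have hconst : ∫ z in Set.Ioc 0 (σ ^ 2), (2 * stdPhi 1 / a) * z ∂μ
        = (2 * stdPhi 1 / a) * K := by
      rw [hK_def]
      exact integral_const_mul _ _
    have heq : 2 * stdPhi 1 * K / σ ^ 2 / Real.sqrt t = (2 * stdPhi 1 / a) * K := by
      rw [ha_def]
      field_simp
    rw [heq]
    rw [hconst] at hlow2
    exact hlow2.trans hlow1
  · -- upper bound
    have hup : ∫ z, F z ∂μ ≤ ∫ z, (2 * stdPhi 0 / a) * |z| ∂μ := by
      refine integral_mono hFint (habs.const_mul _) fun z => ?_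
      by_cases hz : z ∈ Set.Ioi (0:ℝ)
      · have hz0 : (0:ℝ) < z := hz
        rw [hF_def]
        simp only [Set.indicator_of_mem hz, mul_one]
        have h1 := stdCdf_sub_le (div_nonneg hz0.le ha.le)
        rw [abs_of_pos hz0]
        calc stdCdf (z / a) - stdCdf (-(z / a)) ≤ 2 * stdPhi 0 * (z / a) := h1
          _ = 2 * stdPhi 0 / a * z := by ring
      · have hFz : F z = 0 := by simp [hF_def, Set.indicator_of_notMem hz]
        rw [hFz]
        positivity
    rw [integral_const_mul, ← hM_def] at hup
    refine hup.trans ?_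
    have heq : 2 * stdPhi 0 / a * M = (2 * stdPhi 0 * M / σ ^ 2) / Real.sqrt t := by
      rw [ha_def]
      field_simp
    rw [heq]
    gcongr
    linarith
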